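/- For every (A,b) ∈ LTA(n,2)_{h2}^{h1}, the coefficient of (A,b)·h1 vanishes at h2 and at every monomial in (O_{h1}∖O_{h2})∩D, in O_{h1}∩O_{h2}, and in O_{h2}∖O_{h1}∖D; that is, ⟨(A,b)·h1⟩_{h2} = 0, and ⟨(A,b)·h1⟩_f = 0 for all f ∈ ((O_{h1}∖O_{h2})∩D) ∪ (O_{h1}∩O_{h2}) ∪ (O_{h2}∖O_{h1}∖D). -/

import Mathlib

open Finset

/-! Common setup: `R_n = F_2[x_0,…,x_{n−1}]/(x_i^2 − x_i)`.  A (squarefree) monomial is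
identified with its index set `ind(g) ⊆ {0,…,n−1}`.  Reduced elements of `R_n` are
identified, via the (bijective) evaluation map `ev`, with Boolean functions
`F_2^n → F_2`, i.e. with vectors in `F_2^N` indexed by the points of `F_2^n`. -/

/-- Monomials of `M_n`, identified with their index sets. -/
abbrev Mon (n : ℕ) := Finset (Fin n)

/-- Points of `F_2^n`. -/
abbrev Pt (n : ℕ) := Fin n → ZMod 2

/-- Elements of `R_n` (equivalently, vectors of `F_2^N`), identified with Boolean
functions via the evaluation map `ev`. -/
abbrev BF (n : ℕ) := Pt n → ZMod 2

variable {n : ℕ}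

/-- `ev` of the monomial `∏_{i ∈ S} x_i`. -/
def evm (S : Mon n) : BF n := fun x => ∏ i ∈ S, x i

/-- The coefficient `⟨f⟩_S` of the monomial `S` in the reduced polynomial represented by
the Boolean function `f` (binary Möbius inversion: `⟨f⟩_S = ∑_{supp x ⊆ S} f(x)`). -/
def mcoeff (f : BF n) (S : Mon n) : ZMod 2 :=
  ∑ x ∈ Finset.univ.filter (fun x : Pt n => ∀ i ∉ S, x i = 0), f x

/-- The row index `[g] = ∑_{i ∉ ind(g)} 2^i` of a monomial. -/
def rowIdx (S : Mon n) : ℕ := ∑ i ∈ Sᶜ, 2 ^ (i : ℕ)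

/-- `Ovd h g` means `h ≺_o g`: `h` is a one-variable descendant of `g`, i.e. `g = h·x_i`
for some `i ∉ ind(h)`, or `g = q·x_i`, `h = q·x_j` for a monomial `q` and `j < i`. -/
def Ovd (h g : Mon n) : Prop :=
  (∃ i ∉ h, g = insert i h) ∨
  (∃ (q : Mon n) (i j : Fin n), i ∉ q ∧ j ∉ q ∧ j < i ∧ g = insert i q ∧ h = insert j q)

/-- The standard partial order `≼` on monomials: `g ≼ h` iff some divisor `h'` of `h` with
`deg h' = deg g` dominates `g` coordinatewise after sorting the index lists increasingly. -/
def MonLE (g h : Mon n) : Prop :=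
  ∃ h' ⊆ h, h'.card = g.card ∧
    List.Forall₂ (· ≤ ·) (Finset.sort g (· ≤ ·)) (Finset.sort h' (· ≤ ·))

/-- `C(I)` is a decreasing monomial code. -/
def DecMonCode (I : Set (Mon n)) : Prop := ∀ h ∈ I, ∀ g, MonLE g h → g ∈ I

/-- The monomial code `C(I)`: the `F_2`-span of `{ev(g) : g ∈ I}`. -/
def code (I : Set (Mon n)) : Set (BF n) := ↑(Submodule.span (ZMod 2) (evm '' I))

/-- An element `(A,b)` of `LTA(n,2)`: `A` lower triangular with unit diagonal. -/
structure LTA (n : ℕ) where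
  A : Matrix (Fin n) (Fin n) (ZMod 2)
  b : Pt n
  diag : ∀ i, A i i = 1
  lower : ∀ i j : Fin n, i < j → A i j = 0

/-- The affine map `x ↦ Ax + b` on points. -/
def LTA.actPt (L : LTA n) (x : Pt n) : Pt n := L.A.mulVec x + L.b

/-- The action of `(A,b)` on `R_n` (equivalently on `F_2^N`):
`((A,b)·f)(x) = f(Ax+b)`, so that `(A,b)·ev(f) = ev((A,b)·f)`. -/
def LTA.act (L : LTA n) (f : BF n) : BF n := fun x => f (L.actPt x)

/-- Hamming weight. -/
def wt (f : BF n) : ℕ := (Finset.univ.filter (fun x => f x ≠ 0)).card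

/-- Weight distribution of a set of vectors: `d ↦ |{x ∈ S : wt x = d}|`. -/
noncomputable def wdist (S : Set (BF n)) : ℕ → ℕ := fun d => Nat.card {x : BF n // x ∈ S ∧ wt x = d}

/-- Membership in the subgroup `LTA(n,2)_{h2}^{h1}`: all strictly-lower-triangular entries of
`A` and all entries of `b` vanish except possibly the free parameters: for
`f ∈ O_{h1}∖O_{h2}∖D`, the entry `a_{s,t}` when `h1 = q·x_s`, `f = q·x_t`, `t < s`, and the
entry `b_r` when `h1 = f·x_r`; for `f ∈ O_{h2}∖O_{h1}∖D`, the entry `a_{s,t}` when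
`h2 = q·x_s`, `f = q·x_t`, `t < s`, and the entry `b_r` when `h2 = f·x_r`. -/
def InSub (h1 h2 : Mon n) (O1 O2 D : Set (Mon n)) (L : LTA n) : Prop :=
  (∀ s t : Fin n, t < s → L.A s t ≠ 0 →
    (∃ f ∈ ((O1 \ O2) \ D), ∃ q : Mon n, s ∉ q ∧ t ∉ q ∧ h1 = insert s q ∧ f = insert t q) ∨
    (∃ f ∈ ((O2 \ O1) \ D), ∃ q : Mon n, s ∉ q ∧ t ∉ q ∧ h2 = insert s q ∧ f = insert t q)) ∧
  (∀ r : Fin n, L.b r ≠ 0 →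
    (∃ f ∈ ((O1 \ O2) \ D), r ∉ f ∧ h1 = insert r f) ∨
    (∃ f ∈ ((O2 \ O1) \ D), r ∉ f ∧ h2 = insert r f))

/-- The standing context: a decreasing monomial code `C(I)` with `n ≥ 1`, last frozen index
`τ = max F` where `F = {0,…,N−1} ∖ {[g] : g ∈ I}`; `h1` the monomial of `I` of smallest row
index; `h2` the monomial of `I` of smallest row index among those with `[h1] < [h2]` that are
not one-variable descendants of `h1`; and the feasibility assumption
`|ind(h1)∖ind(h2)| ≤ 2`, `|ind(h2)∖ind(h1)| ≤ 2`. -/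
structure Setup (n : ℕ) where
  npos : 1 ≤ n
  I : Set (Mon n)
  dec : DecMonCode I
  τ : ℕ
  τlt : τ < 2 ^ n
  τfrozen : τ ∉ rowIdx '' I
  τmax : ∀ m < 2 ^ n, m ∉ rowIdx '' I → m ≤ τ
  h1 : Mon n
  h1mem : h1 ∈ I
  h1min : ∀ g ∈ I, rowIdx h1 ≤ rowIdx g
  h2 : Mon n
  h2mem : h2 ∈ I
  h12 : rowIdx h1 < rowIdx h2
  h2novd : ¬ Ovd h2 h1
  h2min : ∀ g ∈ I, rowIdx h1 < rowIdx g → ¬ Ovd g h1 → rowIdx h2 ≤ rowIdx g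
  feas1 : (h1 \ h2).card ≤ 2
  feas2 : (h2 \ h1).card ≤ 2

namespace Setup

variable (C : Setup n)

/-- `O_{h1} = {f ∈ I : f ≺_o h1, [h2] < [f] < τ}`. -/
def O1 : Set (Mon n) := {f | f ∈ C.I ∧ Ovd f C.h1 ∧ rowIdx C.h2 < rowIdx f ∧ rowIdx f < C.τ}

/-- `O_{h2} = {f ∈ I : f ≺_o h2, [f] < τ}`. -/
def O2 : Set (Mon n) := {f | f ∈ C.I ∧ Ovd f C.h2 ∧ rowIdx f < C.τ}

/-- `O^c_{h1} = {f ∈ I : f ∉ O_{h1}, [h2] < [f] < τ}`. -/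
def O1c : Set (Mon n) := {f | f ∈ C.I ∧ f ∉ C.O1 ∧ rowIdx C.h2 < rowIdx f ∧ rowIdx f < C.τ}

/-- `O^c_{h2} = {f ∈ I : f ∉ O_{h2}, [h2] < [f] < τ}`. -/
def O2c : Set (Mon n) := {f | f ∈ C.I ∧ f ∉ C.O2 ∧ rowIdx C.h2 < rowIdx f ∧ rowIdx f < C.τ}

/-- `D = {f ∈ O_{h1} ∪ O_{h2} : ∏_{j ∈ ind(h1)∩ind(h2)} x_j ∤ f}`. -/
def D : Set (Mon n) := {f | f ∈ C.O1 ∪ C.O2 ∧ ¬ (C.h1 ∩ C.h2 ⊆ f)}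

/-- `T = {f ∈ I : [f] > τ}`. -/
def T : Set (Mon n) := {f | f ∈ C.I ∧ C.τ < rowIdx f}

/-- `B = ((O_{h2}∖O_{h1}) ∩ D) ∪ (O^c_{h1} ∩ O^c_{h2}) ∪ T`. -/
def B : Set (Mon n) := ((C.O2 \ C.O1) ∩ C.D) ∪ (C.O1c ∩ C.O2c) ∪ C.T

/-- `(A,b) ∈ LTA(n,2)_{h2}^{h1}`. -/
def Mem (L : LTA n) : Prop := InSub C.h1 C.h2 C.O1 C.O2 C.D L

/-- `W = {g ∈ O^c_{h1} ∩ O^c_{h2} : ∃ (A,b) ∈ LTA(n,2)_{h2}^{h1}, ∃ p ∈ O_{h1}∖O_{h2}∖D,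
⟨(A,b)·g⟩_p ≠ 0}`. -/
def W : Set (Mon n) :=
  {g | g ∈ C.O1c ∩ C.O2c ∧
    ∃ L : LTA n, C.Mem L ∧ ∃ p ∈ ((C.O1 \ C.O2) \ C.D), mcoeff (L.act (evm g)) p ≠ 0}

/-- `L` and `L'` have equal values on all entries associated with `O_{h2}∖O_{h1}∖D`
in the definition of the subgroup `LTA(n,2)_{h2}^{h1}`. -/
def agreeO2 (L L' : LTA n) : Prop :=
  (∀ f ∈ ((C.O2 \ C.O1) \ C.D), ∀ (q : Mon n) (s t : Fin n),
      s ∉ q → t ∉ q → t < s → C.h2 = insert s q → f = insert t q → L.A s t = L'.A s t) ∧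
  (∀ f ∈ ((C.O2 \ C.O1) \ C.D), ∀ r : Fin n, r ∉ f → C.h2 = insert r f → L.b r = L'.b r)

end Setup

section Aux
variable {n : ℕ}

lemma zmod2_cases (y : ZMod 2) : y = 0 ∨ y = 1 := by revert y; decide

lemma zmod2_ne_zero {y : ZMod 2} (h : y ≠ 0) : y = 1 := (zmod2_cases y).resolve_left h

lemma mcoeff_add (f g : BF n) (S : Mon n) :
    mcoeff (fun x => f x + g x) S = mcoeff f S + mcoeff g S := by
  simp [mcoeff, Finset.sum_add_distrib]

lemma mcoeff_finsum {ι : Type*} (T : Finset ι) (F : ι → BF n) (S : Mon n) :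
    mcoeff (fun x => ∑ t ∈ T, F t x) S = ∑ t ∈ T, mcoeff (F t) S := by
  simp [mcoeff]; exact Finset.sum_comm

lemma mcoeff_const_mul (c : ZMod 2) (f : BF n) (S : Mon n) :
    mcoeff (fun x => c * f x) S = c * mcoeff f S := by
  simp [mcoeff, Finset.mul_sum]

lemma prod_split (g S : Mon n) (x : Pt n) : (∏ i : Fin n,
      ((if i ∈ g then x i else 1) * (if i ∈ S then 1 else 1 + x i)))
      = (∏ i ∈ g, x i) * ∏ i ∈ Sᶜ, (1 + x i) := by
  rw [Finset.prod_mul_distrib]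
  congr 1
  · rw [Finset.prod_ite_mem, Finset.univ_inter]
  · have : ∀ i : Fin n, (if i ∈ S then (1:ZMod 2) else 1 + x i)
        = (if i ∈ Sᶜ then 1 + x i else 1) := by
      intro i; by_cases h : i ∈ S <;> simp [h]
    simp only [this]
    rw [Finset.prod_ite_mem, Finset.univ_inter]

lemma mcoeff_evm (g S : Mon n) : mcoeff (evm g) S = if S = g then 1 else 0 := by
  classical
  have key : mcoeff (evm g) S
      = ∑ x : Pt n, ∏ i : Fin n,
          ((if i ∈ g then x i else 1) * (if i ∈ S then 1 else 1 + x i)) := by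
    rw [mcoeff, Finset.sum_filter]
    apply Finset.sum_congr rfl
    intro x _
    rw [prod_split]
    by_cases hx : ∀ i ∉ S, x i = 0
    · rw [if_pos hx]
      have : ∏ i ∈ Sᶜ, (1 + x i) = 1 := by
        apply Finset.prod_eq_one
        intro i hi
        rw [hx i (by simpa using hi)]; ring
      rw [this, mul_one]; rfl
    · rw [if_neg hx]
      push_neg at hx
      obtain ⟨i, hiS, hxi⟩ := hx
      have h1 : x i = 1 := zmod2_ne_zero hxi
      have : ∏ i ∈ Sᶜ, (1 + x i) = 0 := by
        apply Finset.prod_eq_zero (Finset.mem_compl.2 hiS)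
        rw [h1]; decide
      rw [this, mul_zero]
  have hps := Finset.prod_univ_sum (t := fun _ : Fin n => (Finset.univ : Finset (ZMod 2)))
    (f := fun i y => (if i ∈ g then y else 1) * (if i ∈ S then 1 else 1 + y))
  rw [key, ← Fintype.piFinset_univ, ← hps]
  have : ∀ i : Fin n, (∑ y : ZMod 2, (if i ∈ g then y else 1) * (if i ∈ S then 1 else 1 + y))
      = if (i ∈ S ↔ i ∈ g) then 1 else 0 := by
    intro i
    by_cases h1 : i ∈ g <;> by_cases h2 : i ∈ S <;> simp [h1, h2] <;> decide
  rw [Finset.prod_congr rfl (fun i _ => this i)]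
  by_cases h : S = g
  · subst h; simp
  · rw [if_neg h]
    have : ∃ i : Fin n, ¬ (i ∈ S ↔ i ∈ g) := by
      by_contra hc
      push_neg at hc
      exact h (Finset.ext fun i => hc i)
    obtain ⟨i, hi⟩ := this
    exact Finset.prod_eq_zero (Finset.mem_univ i) (if_neg hi)

lemma rowIdx_insert {t : Fin n} {S : Mon n} (h : t ∉ S) :
    rowIdx S = rowIdx (insert t S) + 2 ^ (t : ℕ) := by
  have ht : t ∈ Sᶜ := Finset.mem_compl.2 h
  rw [rowIdx, rowIdx, Finset.compl_insert, ← Finset.add_sum_erase _ _ ht]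
  ring

lemma pow_lt_pow_iff_fin {a b : Fin n} : 2 ^ (a:ℕ) < 2 ^ (b:ℕ) ↔ a < b := by
  rw [Nat.pow_lt_pow_iff_right (by norm_num)]
  exact Iff.symm Fin.lt_iff_val_lt_val

lemma ovd_rowIdx_lt {h g : Mon n} (hov : Ovd h g) : rowIdx g < rowIdx h := by
  rcases hov with ⟨i, hi, rfl⟩ | ⟨q, i, j, hiq, hjq, hji, rfl, rfl⟩
  · have h1 := rowIdx_insert hi
    have h2 : 0 < 2 ^ (i:ℕ) := Nat.pow_pos (by norm_num)
    omega
  · have h1 := rowIdx_insert hiq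
    have h2 := rowIdx_insert hjq
    have h3 : 2 ^ (j:ℕ) < 2 ^ (i:ℕ) := pow_lt_pow_iff_fin.2 hji
    omega

variable {C : Setup n}

lemma X_props {f : Mon n} (hf : f ∈ (C.O1 \ C.O2) \ C.D) :
    f ∈ C.I ∧ rowIdx C.h2 < rowIdx f ∧ rowIdx f < C.τ ∧ (C.h1 ∩ C.h2) ⊆ f ∧ ¬ Ovd f C.h2 := by
  obtain ⟨⟨hO1, hnO2⟩, hnD⟩ := hf
  obtain ⟨hI, hovd, hlt1, hlt2⟩ := hO1
  refine ⟨hI, hlt1, hlt2, ?_, ?_⟩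
  · by_contra hK
    exact hnD ⟨Or.inl ⟨hI, hovd, hlt1, hlt2⟩, hK⟩
  · intro hov
    exact hnO2 ⟨hI, hov, hlt2⟩

lemma K_sub_of_O2X {f : Mon n} (hf : f ∈ (C.O2 \ C.O1) \ C.D) : (C.h1 ∩ C.h2) ⊆ f := by
  obtain ⟨⟨hO2, _⟩, hnD⟩ := hf
  by_contra hK
  exact hnD ⟨Or.inr hO2, hK⟩

lemma rowA {L : LTA n} (hL : C.Mem L) {s t : Fin n} (hs : s ∈ C.h1) (hne : t ≠ s)
    (hA : L.A s t ≠ 0) :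
    t < s ∧ t ∉ C.h1 ∧ s ∉ C.h2 ∧ insert t (C.h1.erase s) ∈ (C.O1 \ C.O2) \ C.D := by
  have hts : t < s := by
    rcases lt_trichotomy t s with h | h | h
    · exact h
    · exact absurd h hne
    · exact absurd (L.lower s t h) hA
  rcases hL.1 s t hts hA with ⟨f, hfX, q, hsq, htq, hh1, hfq⟩ | ⟨f, hfX, q, hsq, htq, hh2, hfq⟩
  · have hq : q = C.h1.erase s := by rw [hh1, Finset.erase_insert hsq]
    have hKf := (X_props hfX).2.2.2.1
    have hsh2 : s ∉ C.h2 := by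
      intro hs2
      have : s ∈ f := hKf (Finset.mem_inter.2 ⟨hs, hs2⟩)
      rw [hfq] at this
      rcases Finset.mem_insert.1 this with h | h
      · exact hne h.symm
      · exact hsq h
    refine ⟨hts, ?_, hsh2, by rwa [← hq, ← hfq]⟩
    intro hth1
    rw [hh1] at hth1
    rcases Finset.mem_insert.1 hth1 with h | h
    · exact hne h
    · exact htq h
  · exfalso
    have hKf := K_sub_of_O2X hfX
    have hs2 : s ∈ C.h2 := by rw [hh2]; exact Finset.mem_insert_self s q
    have : s ∈ f := hKf (Finset.mem_inter.2 ⟨hs, hs2⟩)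
    rw [hfq] at this
    rcases Finset.mem_insert.1 this with h | h
    · exact hne h.symm
    · exact hsq h

lemma rowb {L : LTA n} (hL : C.Mem L) {r : Fin n} (hr : r ∈ C.h1) (hb : L.b r ≠ 0) :
    r ∉ C.h2 ∧ C.h1.erase r ∈ (C.O1 \ C.O2) \ C.D := by
  rcases hL.2 r hb with ⟨f, hfX, hrf, hh1⟩ | ⟨f, hfX, hrf, hh2⟩
  · have hf : f = C.h1.erase r := by rw [hh1, Finset.erase_insert hrf]
    have hKf := (X_props hfX).2.2.2.1
    refine ⟨?_, by rwa [← hf]⟩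
    intro hr2
    exact hrf (hKf (Finset.mem_inter.2 ⟨hr, hr2⟩))
  · exfalso
    have hKf := K_sub_of_O2X hfX
    have hr2 : r ∈ C.h2 := by rw [hh2]; exact Finset.mem_insert_self r f
    exact hrf (hKf (Finset.mem_inter.2 ⟨hr, hr2⟩))

end Aux
section Aux2
variable {n : ℕ}

lemma zmod2_mul_self (y : ZMod 2) : y * y = y := by revert y; decide

lemma evm_mul_x (S : Mon n) (t : Fin n) (x : Pt n) :
    evm S x * x t = evm (insert t S) x := by
  by_cases h : t ∈ S
  · rw [Finset.insert_eq_self.2 h, evm, ← Finset.prod_erase_mul _ _ h, mul_assoc,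
      zmod2_mul_self]
  · rw [evm, evm, Finset.prod_insert h, mul_comm]

lemma actPt_apply (L : LTA n) (x : Pt n) (i : Fin n) :
    L.actPt x i = x i + ((∑ t ∈ Finset.univ.filter (fun t => t ≠ i ∧ L.A i t ≠ 0), x t)
      + L.b i) := by
  have h1 : L.actPt x i = (∑ j : Fin n, L.A i j * x j) + L.b i := by
    simp [LTA.actPt, Matrix.mulVec, dotProduct]
  have h2 : (∑ j : Fin n, L.A i j * x j)
      = L.A i i * x i + ∑ j ∈ Finset.univ.erase i, L.A i j * x j := by
    rw [← Finset.add_sum_erase _ _ (Finset.mem_univ i)]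
  have h3 : ∑ j ∈ Finset.univ.erase i, L.A i j * x j
      = ∑ j ∈ Finset.univ.filter (fun t => t ≠ i ∧ L.A i t ≠ 0), x j := by
    rw [← Finset.sum_filter_of_ne (s := Finset.univ.erase i)
      (p := fun t => L.A i t ≠ 0) (f := fun j => L.A i j * x j)
      (by intro y _ hy h0; exact hy (by simp [h0]))]
    have hset : (Finset.univ.erase i).filter (fun t => L.A i t ≠ 0)
        = Finset.univ.filter (fun t => t ≠ i ∧ L.A i t ≠ 0) := by
      ext j; simp [Finset.mem_erase, and_comm]
    rw [hset]
    apply Finset.sum_congr rfl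
    intro j hj
    rw [zmod2_ne_zero (Finset.mem_filter.1 hj).2.2, one_mul]
  rw [h1, h2, h3, L.diag i, one_mul, add_assoc]

variable {C : Setup n} {L : LTA n}

lemma actPt_K (hL : C.Mem L) {i : Fin n} (hi : i ∈ C.h1 ∩ C.h2) (x : Pt n) :
    L.actPt x i = x i := by
  have hi1 : i ∈ C.h1 := (Finset.mem_inter.1 hi).1
  have hi2 : i ∈ C.h2 := (Finset.mem_inter.1 hi).2
  rw [actPt_apply]
  have he : Finset.univ.filter (fun t => t ≠ i ∧ L.A i t ≠ 0) = ∅ := by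
    rw [Finset.filter_eq_empty_iff]
    rintro t - ⟨hti, hA⟩
    exact (rowA hL hi1 hti hA).2.2.1 hi2
  have hb : L.b i = 0 := by
    by_contra hb
    exact (rowb hL hi1 hb).1 hi2
  rw [he, hb]
  simp

end Aux2
section Aux3
variable {n : ℕ} {C : Setup n}

/-- Consequence of `X`-membership used everywhere: not a one-variable descendant of `h2`. -/
lemma X_novd {f : Mon n} (hf : f ∈ (C.O1 \ C.O2) \ C.D) : ¬ Ovd f C.h2 :=
  (X_props hf).2.2.2.2

lemma X_row {f : Mon n} (hf : f ∈ (C.O1 \ C.O2) \ C.D) : rowIdx C.h2 < rowIdx f :=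
  (X_props hf).2.1

/-- `X`-sets are not in `O2`. -/
lemma X_nO2 {f : Mon n} (hf : f ∈ (C.O1 \ C.O2) \ C.D) : f ∉ C.O2 := fun h => hf.1.2 h

lemma insert_rot (a u t : Fin n) (W : Mon n) :
    insert a (insert u (insert t W)) = insert t (insert u (insert a W)) := by
  rw [Finset.insert_comm a u, Finset.insert_comm a t, Finset.insert_comm u t]

/-- D1: `¬ Ovd (K ∪ {t,u}) h2` for a genuine double substitution. -/
lemma noOvd_D1 {a c t u : Fin n} (hac : a ≠ c)
    (ha1 : a ∈ C.h1) (ha2 : a ∉ C.h2) (hc1 : c ∈ C.h1) (hc2 : c ∉ C.h2)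
    (hh1 : C.h1 = insert a (insert c (C.h1 ∩ C.h2)))
    (ht1 : t ∉ C.h1) (hu1 : u ∉ C.h1) (hta : t < a) (huc : u < c) (htu : t ≠ u)
    (hXa : insert t (insert c (C.h1 ∩ C.h2)) ∈ (C.O1 \ C.O2) \ C.D)
    (hXc : insert u (insert a (C.h1 ∩ C.h2)) ∈ (C.O1 \ C.O2) \ C.D) :
    ¬ Ovd (insert u (insert t (C.h1 ∩ C.h2))) C.h2 := by
  classical
  set K := C.h1 ∩ C.h2 with hKdef
  have hKh1 : K ⊆ C.h1 := Finset.inter_subset_left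
  have hKh2 : K ⊆ C.h2 := Finset.inter_subset_right
  have htK : t ∉ K := fun h => ht1 (hKh1 h)
  have huK : u ∉ K := fun h => hu1 (hKh1 h)
  have haK : a ∉ K := fun h => ha2 (hKh2 h)
  have hcK : c ∉ K := fun h => hc2 (hKh2 h)
  have hta' : t ≠ a := fun h => ht1 (h ▸ ha1)
  have htc' : t ≠ c := fun h => ht1 (h ▸ hc1)
  have hua' : u ≠ a := fun h => hu1 (h ▸ ha1)
  have huc' : u ≠ c := fun h => hu1 (h ▸ hc1)
  set S : Mon n := insert u (insert t K) with hSdef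
  have htS : t ∈ S := by simp [hSdef]
  have huS : u ∈ S := by simp [hSdef]
  rintro (⟨r, hrS, hh2⟩ | ⟨q, i, j, hiq, hjq, hji, hh2, hSq⟩)
  · -- first clause : h2 = insert r S
    by_cases hr1 : r ∈ C.h1
    · rw [hh1] at hr1
      rcases Finset.mem_insert.1 hr1 with heq | hr1'
      · -- r = a : h2 = insert t (Xc u), contradict ¬Ovd (Xc u) h2
        rw [heq] at hh2
        refine X_novd hXc (Or.inl ⟨t, by simp [htu, hta', htK], ?_⟩)
        rw [hh2, hSdef, insert_rot]
      · rcases Finset.mem_insert.1 hr1' with heq | hrK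
        · -- r = c : h2 = insert u (Xa t)
          rw [heq] at hh2
          refine X_novd hXa (Or.inl ⟨u, by simp [Ne.symm htu, huc', huK], ?_⟩)
          rw [hh2, hSdef, Finset.insert_comm c u, Finset.insert_comm c t]
        · exact hrS (by simp [hSdef, hrK])
    · -- r ∉ h1 : three new elements in h2 \ h1
      have hrt : r ≠ t := fun h => hrS (h ▸ htS)
      have hru : r ≠ u := fun h => hrS (h ▸ huS)
      have hsub : ({t, u, r} : Finset (Fin n)) ⊆ C.h2 \ C.h1 := by
        intro y hy
        simp only [Finset.mem_insert, Finset.mem_singleton] at hy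
        rw [Finset.mem_sdiff, hh2]
        rcases hy with rfl | rfl | rfl
        · exact ⟨Finset.mem_insert_of_mem htS, ht1⟩
        · exact ⟨Finset.mem_insert_of_mem huS, hu1⟩
        · exact ⟨Finset.mem_insert_self _ _, hr1⟩
      have hcard : ({t, u, r} : Finset (Fin n)).card = 3 := by
        rw [Finset.card_insert_of_notMem (by simp [htu, hrt.symm]),
          Finset.card_insert_of_notMem (by simp [hru.symm])]
        rfl
      have := Finset.card_le_card hsub
      have := C.feas2
      omega
  · -- second clause : h2 = insert i q, S = insert j q, j < i
    have hjS : j ∈ S := by rw [hSq]; exact Finset.mem_insert_self _ _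
    have hiS : i ∉ S := by
      rw [hSq]
      intro h
      rcases Finset.mem_insert.1 h with h | h
      · exact absurd (h ▸ hji) (lt_irrefl _)
      · exact hiq h
    rcases Finset.mem_insert.1 hjS with heq | hjS'
    · -- j = u : q = insert t K, use Xa
      rw [heq] at hSq hjq
      have hq : q = insert t K := by
        have : S.erase u = insert t K := by
          rw [hSdef, Finset.erase_insert (by simp [huK, Ne.symm htu])]
        rw [← this, hSq, Finset.erase_insert hjq]
      have hcq : c ∉ q := by simp [hq, htc'.symm, hcK]
      have e1 : rowIdx q = rowIdx C.h2 + 2 ^ (i:ℕ) := by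
        have := rowIdx_insert hiq; rw [← hh2] at this; exact this
      have e2 : rowIdx q = rowIdx (insert t (insert c K)) + 2 ^ (c:ℕ) := by
        have := rowIdx_insert hcq
        rw [hq] at this ⊢
        rwa [Finset.insert_comm] at this
      have hrow := X_row hXa
      have hpow : 2 ^ (c:ℕ) < 2 ^ (i:ℕ) := by omega
      have hci : c < i := pow_lt_pow_iff_fin.1 hpow
      refine X_novd hXa (Or.inr ⟨q, i, c, hiq, hcq, hci, hh2, ?_⟩)
      rw [hq, Finset.insert_comm]
    · rcases Finset.mem_insert.1 hjS' with heq | hjK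
      · -- j = t : q = insert u K, use Xc
        rw [heq] at hSq hjq
        have hq : q = insert u K := by
          have : S.erase t = insert u K := by
            rw [hSdef, Finset.insert_comm, Finset.erase_insert (by simp [htK, htu])]
          rw [← this, hSq, Finset.erase_insert hjq]
        have haq : a ∉ q := by simp [hq, hua'.symm, haK]
        have e1 : rowIdx q = rowIdx C.h2 + 2 ^ (i:ℕ) := by
          have := rowIdx_insert hiq; rw [← hh2] at this; exact this
        have e2 : rowIdx q = rowIdx (insert u (insert a K)) + 2 ^ (a:ℕ) := by
          have := rowIdx_insert haq
          rw [hq] at this ⊢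
          rwa [Finset.insert_comm] at this
        have hrow := X_row hXc
        have hpow : 2 ^ (a:ℕ) < 2 ^ (i:ℕ) := by omega
        have hai : a < i := pow_lt_pow_iff_fin.1 hpow
        refine X_novd hXc (Or.inr ⟨q, i, a, hiq, haq, hai, hh2, ?_⟩)
        rw [hq, Finset.insert_comm]
      · -- j ∈ K : j ∈ h2 but j ∉ insert i q
        have hjh2 : j ∈ C.h2 := hKh2 hjK
        rw [hh2] at hjh2
        rcases Finset.mem_insert.1 hjh2 with rfl | h
        · exact absurd hji (lt_irrefl _)
        · exact hjq h

end Aux3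
section Aux4
variable {n : ℕ} {C : Setup n}

lemma pow_max_contra {a c i : Fin n} (h1 : 2 ^ (a:ℕ) < 2 ^ (i:ℕ))
    (h2 : 2 ^ (c:ℕ) < 2 ^ (i:ℕ)) (h3 : 2 ^ (i:ℕ) < 2 ^ (a:ℕ) + 2 ^ (c:ℕ)) : False := by
  have ha : (a:ℕ) < (i:ℕ) := (Nat.pow_lt_pow_iff_right (by norm_num)).1 h1
  have hc : (c:ℕ) < (i:ℕ) := (Nat.pow_lt_pow_iff_right (by norm_num)).1 h2
  set m := max (a:ℕ) (c:ℕ) with hm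
  have hma : 2 ^ (a:ℕ) ≤ 2 ^ m := Nat.pow_le_pow_right (by norm_num) (le_max_left _ _)
  have hmc : 2 ^ (c:ℕ) ≤ 2 ^ m := Nat.pow_le_pow_right (by norm_num) (le_max_right _ _)
  have hmi : 2 ^ (m+1) ≤ 2 ^ (i:ℕ) := Nat.pow_le_pow_right (by norm_num) (by omega)
  have hsucc : 2 ^ (m+1) = 2 ^ m * 2 := pow_succ 2 m
  omega

/-- D2: `¬ Ovd (K ∪ {t}) h2`, both `f^1_t` and `f^2_t` in `X`. -/
lemma noOvd_D2 {a c t : Fin n} (hac : a ≠ c)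
    (ha1 : a ∈ C.h1) (ha2 : a ∉ C.h2) (hc1 : c ∈ C.h1) (hc2 : c ∉ C.h2)
    (hh1 : C.h1 = insert a (insert c (C.h1 ∩ C.h2)))
    (ht1 : t ∉ C.h1) (hta : t < a) (htc : t < c)
    (hXa : insert t (insert c (C.h1 ∩ C.h2)) ∈ (C.O1 \ C.O2) \ C.D)
    (hXc : insert t (insert a (C.h1 ∩ C.h2)) ∈ (C.O1 \ C.O2) \ C.D) :
    ¬ Ovd (insert t (C.h1 ∩ C.h2)) C.h2 := by
  classical
  set K := C.h1 ∩ C.h2 with hKdef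
  have hKh1 : K ⊆ C.h1 := Finset.inter_subset_left
  have hKh2 : K ⊆ C.h2 := Finset.inter_subset_right
  have htK : t ∉ K := fun h => ht1 (hKh1 h)
  have haK : a ∉ K := fun h => ha2 (hKh2 h)
  have hcK : c ∉ K := fun h => hc2 (hKh2 h)
  have hta' : t ≠ a := fun h => ht1 (h ▸ ha1)
  have htc' : t ≠ c := fun h => ht1 (h ▸ hc1)
  set S : Mon n := insert t K with hSdef
  have htS : t ∈ S := Finset.mem_insert_self _ _
  have haS : a ∉ S := by simp [hSdef, hta'.symm, haK]
  have hcS : c ∉ S := by simp [hSdef, htc'.symm, hcK]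
  rintro (⟨r, hrS, hh2⟩ | ⟨q, i, j, hiq, hjq, hji, hh2, hSq⟩)
  · by_cases hr1 : r ∈ C.h1
    · rw [hh1] at hr1
      rcases Finset.mem_insert.1 hr1 with heq | hr1'
      · -- r = a : h2 = Xc t, rowIdx contradiction
        rw [heq] at hh2
        have h2eq : C.h2 = insert t (insert a K) := by
          rw [hh2, hSdef, Finset.insert_comm]
        exact absurd (X_row hXc) (by rw [← h2eq]; exact lt_irrefl _)
      · rcases Finset.mem_insert.1 hr1' with heq | hrK
        · rw [heq] at hh2
          have h2eq : C.h2 = insert t (insert c K) := by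
            rw [hh2, hSdef, Finset.insert_comm]
          exact absurd (X_row hXa) (by rw [← h2eq]; exact lt_irrefl _)
        · exact hrS (by simp [hSdef, hrK])
    · -- r ∉ h1
      have e1 : rowIdx S = rowIdx C.h2 + 2 ^ (r:ℕ) := by
        have := rowIdx_insert hrS; rw [← hh2] at this; exact this
      have e2 : rowIdx S = rowIdx (insert t (insert a K)) + 2 ^ (a:ℕ) := by
        have := rowIdx_insert haS
        rwa [hSdef, Finset.insert_comm] at this
      have hrow := X_row hXc
      have har : a < r := pow_lt_pow_iff_fin.1 (by omega)
      exact X_novd hXc (Or.inr ⟨S, r, a, hrS, haS, har, hh2,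
        by rw [hSdef, Finset.insert_comm]⟩)
  · have hjS : j ∈ S := by rw [hSq]; exact Finset.mem_insert_self _ _
    rcases Finset.mem_insert.1 hjS with heq | hjK
    · -- j = t : q = K, h2 = insert i K
      rw [heq] at hSq hjq
      have hq : q = K := by
        have : S.erase t = K := by rw [hSdef, Finset.erase_insert htK]
        rw [← this, hSq, Finset.erase_insert hjq]
      subst hq
      have e1 : rowIdx K = rowIdx C.h2 + 2 ^ (i:ℕ) := by
        have := rowIdx_insert hiq; rw [← hh2] at this; exact this
      have eXa : rowIdx K = rowIdx (insert t (insert c K)) + 2 ^ (t:ℕ) + 2 ^ (c:ℕ) := by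
        have k1 := rowIdx_insert hcK
        have k2 := rowIdx_insert (show t ∉ insert c K by simp [htc', htK])
        omega
      have eXc : rowIdx K = rowIdx (insert t (insert a K)) + 2 ^ (t:ℕ) + 2 ^ (a:ℕ) := by
        have k1 := rowIdx_insert haK
        have k2 := rowIdx_insert (show t ∉ insert a K by simp [hta', htK])
        omega
      have eh1 : rowIdx K = rowIdx C.h1 + 2 ^ (a:ℕ) + 2 ^ (c:ℕ) := by
        have k1 := rowIdx_insert hcK
        have k2 := rowIdx_insert (show a ∉ insert c K by simp [hac, haK])
        rw [← hh1] at k2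
        omega
      have hrow1 : rowIdx C.h2 < rowIdx (insert t (insert c K)) := X_row hXa
      have hrow2 : rowIdx C.h2 < rowIdx (insert t (insert a K)) := X_row hXc
      have h12 := C.h12
      have hpt : 0 < 2 ^ (t:ℕ) := Nat.pow_pos (by norm_num)
      have hpa : 0 < 2 ^ (a:ℕ) := Nat.pow_pos (by norm_num)
      have hpc : 0 < 2 ^ (c:ℕ) := Nat.pow_pos (by norm_num)
      exact pow_max_contra (a := a) (c := c) (i := i) (by omega) (by omega) (by omega)
    · have hjh2 : j ∈ C.h2 := hKh2 hjK
      rw [hh2] at hjh2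
      rcases Finset.mem_insert.1 hjh2 with rfl | h
      · exact absurd hji (lt_irrefl _)
      · exact hjq h

/-- D3: `¬ Ovd (K ∪ {t}) h2` with `f^1_t ∈ X` and `g_c ∈ X`. -/
lemma noOvd_D3 {a c t : Fin n} (hac : a ≠ c)
    (ha1 : a ∈ C.h1) (ha2 : a ∉ C.h2) (hc1 : c ∈ C.h1) (hc2 : c ∉ C.h2)
    (hh1 : C.h1 = insert a (insert c (C.h1 ∩ C.h2)))
    (ht1 : t ∉ C.h1) (hta : t < a)
    (hXa : insert t (insert c (C.h1 ∩ C.h2)) ∈ (C.O1 \ C.O2) \ C.D)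
    (hGc : insert a (C.h1 ∩ C.h2) ∈ (C.O1 \ C.O2) \ C.D) :
    ¬ Ovd (insert t (C.h1 ∩ C.h2)) C.h2 := by
  classical
  set K := C.h1 ∩ C.h2 with hKdef
  have hKh1 : K ⊆ C.h1 := Finset.inter_subset_left
  have hKh2 : K ⊆ C.h2 := Finset.inter_subset_right
  have htK : t ∉ K := fun h => ht1 (hKh1 h)
  have haK : a ∉ K := fun h => ha2 (hKh2 h)
  have hcK : c ∉ K := fun h => hc2 (hKh2 h)
  have hta' : t ≠ a := fun h => ht1 (h ▸ ha1)
  have htc' : t ≠ c := fun h => ht1 (h ▸ hc1)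
  set S : Mon n := insert t K with hSdef
  have htS : t ∈ S := Finset.mem_insert_self _ _
  have haS : a ∉ S := by simp [hSdef, hta'.symm, haK]
  have hcS : c ∉ S := by simp [hSdef, htc'.symm, hcK]
  rintro (⟨r, hrS, hh2⟩ | ⟨q, i, j, hiq, hjq, hji, hh2, hSq⟩)
  · by_cases hr1 : r ∈ C.h1
    · rw [hh1] at hr1
      rcases Finset.mem_insert.1 hr1 with heq | hr1'
      · -- r = a : h2 = insert t Gc, Ovd Gc h2
        rw [heq] at hh2
        refine X_novd hGc (Or.inl ⟨t, by simp [hta', htK], ?_⟩)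
        rw [hh2, hSdef, Finset.insert_comm]
      · rcases Finset.mem_insert.1 hr1' with heq | hrK
        · rw [heq] at hh2
          have h2eq : C.h2 = insert t (insert c K) := by
            rw [hh2, hSdef, Finset.insert_comm]
          exact absurd (X_row hXa) (by rw [← h2eq]; exact lt_irrefl _)
        · exact hrS (by simp [hSdef, hrK])
    · have e1 : rowIdx S = rowIdx C.h2 + 2 ^ (r:ℕ) := by
        have := rowIdx_insert hrS; rw [← hh2] at this; exact this
      have e2 : rowIdx S = rowIdx (insert t (insert c K)) + 2 ^ (c:ℕ) := by
        have := rowIdx_insert hcS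
        rwa [hSdef, Finset.insert_comm] at this
      have hrow := X_row hXa
      have hcr : c < r := pow_lt_pow_iff_fin.1 (by omega)
      exact X_novd hXa (Or.inr ⟨S, r, c, hrS, hcS, hcr, hh2,
        by rw [hSdef, Finset.insert_comm]⟩)
  · have hjS : j ∈ S := by rw [hSq]; exact Finset.mem_insert_self _ _
    rcases Finset.mem_insert.1 hjS with heq | hjK
    · rw [heq] at hSq hjq
      have hq : q = K := by
        have : S.erase t = K := by rw [hSdef, Finset.erase_insert htK]
        rw [← this, hSq, Finset.erase_insert hjq]
      subst hq
      have e1 : rowIdx K = rowIdx C.h2 + 2 ^ (i:ℕ) := by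
        have := rowIdx_insert hiq; rw [← hh2] at this; exact this
      have e2 : rowIdx K = rowIdx (insert a K) + 2 ^ (a:ℕ) := rowIdx_insert haK
      have hrow := X_row hGc
      have hai : a < i := pow_lt_pow_iff_fin.1 (by omega)
      exact X_novd hGc (Or.inr ⟨K, i, a, hiq, haK, hai, hh2, rfl⟩)
    · have hjh2 : j ∈ C.h2 := hKh2 hjK
      rw [hh2] at hjh2
      rcases Finset.mem_insert.1 hjh2 with rfl | h
      · exact absurd hji (lt_irrefl _)
      · exact hjq h

/-- D5: `¬ Ovd K h2` with both `g_a, g_c ∈ X`. -/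
lemma noOvd_D5 {a c : Fin n} (hac : a ≠ c)
    (ha1 : a ∈ C.h1) (ha2 : a ∉ C.h2) (hc1 : c ∈ C.h1) (hc2 : c ∉ C.h2)
    (hh1 : C.h1 = insert a (insert c (C.h1 ∩ C.h2)))
    (hGa : insert c (C.h1 ∩ C.h2) ∈ (C.O1 \ C.O2) \ C.D)
    (hGc : insert a (C.h1 ∩ C.h2) ∈ (C.O1 \ C.O2) \ C.D) :
    ¬ Ovd (C.h1 ∩ C.h2) C.h2 := by
  classical
  set K := C.h1 ∩ C.h2 with hKdef
  have hKh2 : K ⊆ C.h2 := Finset.inter_subset_right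
  have haK : a ∉ K := fun h => ha2 (hKh2 h)
  have hcK : c ∉ K := fun h => hc2 (hKh2 h)
  rintro (⟨r, hrS, hh2⟩ | ⟨q, i, j, hiq, hjq, hji, hh2, hSq⟩)
  · by_cases hr1 : r ∈ C.h1
    · rw [hh1] at hr1
      rcases Finset.mem_insert.1 hr1 with heq | hr1'
      · rw [heq] at hh2
        exact absurd (X_row hGc) (by rw [← hh2]; exact lt_irrefl _)
      · rcases Finset.mem_insert.1 hr1' with heq | hrK
        · rw [heq] at hh2
          exact absurd (X_row hGa) (by rw [← hh2]; exact lt_irrefl _)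
        · exact hrS hrK
    · have e1 : rowIdx K = rowIdx C.h2 + 2 ^ (r:ℕ) := by
        have := rowIdx_insert hrS; rw [← hh2] at this; exact this
      have e2 : rowIdx K = rowIdx (insert a K) + 2 ^ (a:ℕ) := rowIdx_insert haK
      have e3 : rowIdx K = rowIdx (insert c K) + 2 ^ (c:ℕ) := rowIdx_insert hcK
      have eh1 : rowIdx K = rowIdx C.h1 + 2 ^ (a:ℕ) + 2 ^ (c:ℕ) := by
        have k1 := rowIdx_insert hcK
        have k2 := rowIdx_insert (show a ∉ insert c K by simp [hac, haK])
        rw [← hh1] at k2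
        omega
      have hrow1 : rowIdx C.h2 < rowIdx (insert c K) := X_row hGa
      have hrow2 : rowIdx C.h2 < rowIdx (insert a K) := X_row hGc
      have h12 := C.h12
      have hpa : 0 < 2 ^ (a:ℕ) := Nat.pow_pos (by norm_num)
      have hpc : 0 < 2 ^ (c:ℕ) := Nat.pow_pos (by norm_num)
      have hpr : 0 < 2 ^ (r:ℕ) := Nat.pow_pos (by norm_num)
      exact pow_max_contra (a := a) (c := c) (i := r) (by omega) (by omega) (by omega)
  · have hjK : j ∈ K := by rw [hSq]; exact Finset.mem_insert_self _ _
    have hjh2 : j ∈ C.h2 := hKh2 hjK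
    rw [hh2] at hjh2
    rcases Finset.mem_insert.1 hjh2 with rfl | h
    · exact absurd hji (lt_irrefl _)
    · exact hjq h

end Aux4
/-- for `(A,b) ∈ LTA(n,2)_{h2}^{h1}`, the coefficient of `(A,b)·h1` vanishes
at `h2` and at every monomial of `((O_{h1}∖O_{h2})∩D) ∪ (O_{h1}∩O_{h2}) ∪ (O_{h2}∖O_{h1}∖D)`. -/
theorem stmt5 {n : ℕ} (C : Setup n) (L : LTA n) (hL : C.Mem L) :
    mcoeff (L.act (evm C.h1)) C.h2 = 0 ∧
    ∀ f ∈ (((C.O1 \ C.O2) ∩ C.D) ∪ (C.O1 ∩ C.O2) ∪ ((C.O2 \ C.O1) \ C.D)),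
      mcoeff (L.act (evm C.h1)) f = 0 := by
  classical
  suffices H : ∀ S : Mon n,
      (S = C.h2 ∨ S ∈ (((C.O1 \ C.O2) ∩ C.D) ∪ (C.O1 ∩ C.O2) ∪ ((C.O2 \ C.O1) \ C.D))) →
      mcoeff (L.act (evm C.h1)) S = 0 by
    exact ⟨H _ (Or.inl rfl), fun f hf => H f (Or.inr hf)⟩
  intro S hS
  set K := C.h1 ∩ C.h2 with hKdef
  -- generic killer
  have kill : ∀ S' : Mon n, K ⊆ S' → rowIdx C.h2 < rowIdx S' → S' ∉ C.O2 → S ≠ S' := by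
    rintro S' hKs hrow hO2 rfl
    rcases hS with rfl | hS
    · exact absurd hrow (lt_irrefl _)
    rcases hS with (hS | hS) | hS
    · obtain ⟨-, hD⟩ := hS
      obtain ⟨-, hnK⟩ := hD
      exact hnK hKs
    · exact hO2 hS.2
    · obtain ⟨⟨hO2', -⟩, -⟩ := hS
      exact hO2 hO2'
  have killX : ∀ S' ∈ ((C.O1 \ C.O2) \ C.D), S ≠ S' := by
    intro S' hX
    exact kill S' (X_props hX).2.2.2.1 (X_row hX) (X_nO2 hX)
  have killh1 : S ≠ C.h1 := by
    rintro rfl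
    rcases hS with heq | hS
    · have h12 := C.h12
      rw [heq] at h12
      exact lt_irrefl _ h12
    rcases hS with (hS | hS) | hS
    · obtain ⟨-, -, hnK⟩ := hS
      exact hnK Finset.inter_subset_left
    · obtain ⟨⟨-, -, hlt, -⟩, -⟩ := hS
      have := C.h12
      omega
    · obtain ⟨⟨⟨-, hovd, -⟩, -⟩, -⟩ := hS
      have := ovd_rowIdx_lt hovd
      have := C.h12
      omega
  have hcases : (C.h1 \ C.h2).card = 0 ∨ (C.h1 \ C.h2).card = 1 ∨ (C.h1 \ C.h2).card = 2 := by
    have := C.feas1; omega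
  rcases hcases with h0 | h1c | h2c
  · -- |E| = 0
    have hE : C.h1 \ C.h2 = ∅ := Finset.card_eq_zero.1 h0
    have hKeq : K = C.h1 := by
      rw [hKdef]
      exact Finset.inter_eq_left.2 (Finset.sdiff_eq_empty_iff_subset.1 hE)
    have hfun : L.act (evm C.h1) = evm C.h1 := by
      funext x
      show evm C.h1 (L.actPt x) = evm C.h1 x
      refine Finset.prod_congr rfl fun i hi => ?_
      exact actPt_K hL (by rw [← hKdef, hKeq]; exact hi) x
    rw [hfun, mcoeff_evm, if_neg killh1]
  · -- |E| = 1
    obtain ⟨a, hEa⟩ := Finset.card_eq_one.1 h1c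
    have hpt : ∀ i, i ∈ C.h1 ∧ i ∉ C.h2 ↔ i = a := by
      intro i
      constructor
      · intro h
        have : i ∈ C.h1 \ C.h2 := Finset.mem_sdiff.2 h
        rwa [hEa, Finset.mem_singleton] at this
      · intro heq
        have hmem : i ∈ C.h1 \ C.h2 := by rw [hEa, heq]; exact Finset.mem_singleton_self a
        exact Finset.mem_sdiff.1 hmem
    have ha1 : a ∈ C.h1 := ((hpt a).2 rfl).1
    have ha2 : a ∉ C.h2 := ((hpt a).2 rfl).2
    have haK : a ∉ K := fun h => ha2 (Finset.mem_inter.1 h).2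
    have hKa : insert a K = C.h1 := by
      ext i
      simp only [Finset.mem_insert, hKdef, Finset.mem_inter]
      constructor
      · rintro (rfl | ⟨h, -⟩)
        · exact ha1
        · exact h
      · intro hi
        by_cases hi2 : i ∈ C.h2
        · exact Or.inr ⟨hi, hi2⟩
        · exact Or.inl ((hpt i).1 ⟨hi, hi2⟩)
    have herase : C.h1.erase a = K := by rw [← hKa, Finset.erase_insert haK]
    set Ta := Finset.univ.filter (fun t => t ≠ a ∧ L.A a t ≠ 0) with hTa
    have hfun : L.act (evm C.h1) = fun x =>
        evm C.h1 x + (∑ t ∈ Ta, evm (insert t K) x) + L.b a * evm K x := by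
      funext x
      show evm C.h1 (L.actPt x) = _
      have hlhs : evm C.h1 (L.actPt x) = ∏ i ∈ C.h1, L.actPt x i := rfl
      have hKprod : (∏ i ∈ K, L.actPt x i) = evm K x :=
        Finset.prod_congr rfl fun i hi => actPt_K hL (by rw [← hKdef]; exact hi) x
      rw [hlhs, ← hKa, Finset.prod_insert haK, hKprod, actPt_apply, ← hTa]
      simp only [← evm_mul_x, ← Finset.mul_sum]
      ring
    rw [hfun]
    simp only [mcoeff_add, mcoeff_finsum, mcoeff_const_mul, mcoeff_evm]
    have k2 : (∑ t ∈ Ta, if S = insert t K then (1:ZMod 2) else 0) = 0 := by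
      refine Finset.sum_eq_zero fun t ht => ?_
      obtain ⟨-, hne, hA⟩ := Finset.mem_filter.1 ht
      obtain ⟨-, -, -, hXmem⟩ := rowA hL ha1 hne hA
      rw [herase] at hXmem
      exact if_neg (killX _ hXmem)
    have k3 : L.b a * (if S = K then (1:ZMod 2) else 0) = 0 := by
      rcases eq_or_ne (L.b a) 0 with hb | hb
      · rw [hb, zero_mul]
      · obtain ⟨-, hXmem⟩ := rowb hL ha1 hb
        rw [herase] at hXmem
        rw [if_neg (killX _ hXmem), mul_zero]
    rw [if_neg killh1, k2, k3]
    ring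
  · -- |E| = 2
    obtain ⟨a, c, hac, hEac⟩ := Finset.card_eq_two.1 h2c
    have hpt : ∀ i, i ∈ C.h1 ∧ i ∉ C.h2 ↔ (i = a ∨ i = c) := by
      intro i
      rw [← Finset.mem_sdiff, hEac]
      simp
    have ha1 : a ∈ C.h1 := ((hpt a).2 (Or.inl rfl)).1
    have ha2 : a ∉ C.h2 := ((hpt a).2 (Or.inl rfl)).2
    have hc1 : c ∈ C.h1 := ((hpt c).2 (Or.inr rfl)).1
    have hc2 : c ∉ C.h2 := ((hpt c).2 (Or.inr rfl)).2
    have haK : a ∉ K := fun h => ha2 (Finset.mem_inter.1 h).2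
    have hcK : c ∉ K := fun h => hc2 (Finset.mem_inter.1 h).2
    have hh1 : C.h1 = insert a (insert c K) := by
      ext i
      simp only [Finset.mem_insert, hKdef, Finset.mem_inter]
      constructor
      · intro hi
        by_cases hi2 : i ∈ C.h2
        · exact Or.inr (Or.inr ⟨hi, hi2⟩)
        · rcases (hpt i).1 ⟨hi, hi2⟩ with rfl | rfl
          · exact Or.inl rfl
          · exact Or.inr (Or.inl rfl)
      · rintro (rfl | rfl | ⟨h, -⟩)
        · exact ha1
        · exact hc1
        · exact h
    have hh1' : C.h1 = insert c (insert a K) := by rw [hh1, Finset.insert_comm]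
    have hanotcK : a ∉ insert c K := by simp [hac, haK]
    have hcnotaK : c ∉ insert a K := by simp [hac.symm, hcK]
    have herase_a : C.h1.erase a = insert c K := by rw [hh1, Finset.erase_insert hanotcK]
    have herase_c : C.h1.erase c = insert a K := by rw [hh1', Finset.erase_insert hcnotaK]
    set Ta := Finset.univ.filter (fun t => t ≠ a ∧ L.A a t ≠ 0) with hTa
    set Tc := Finset.univ.filter (fun t => t ≠ c ∧ L.A c t ≠ 0) with hTc
    -- properties of substitution indices
    have hTaP : ∀ t ∈ Ta, t < a ∧ t ∉ C.h1 ∧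
        insert t (insert c K) ∈ (C.O1 \ C.O2) \ C.D := by
      intro t ht
      obtain ⟨-, hne, hA⟩ := Finset.mem_filter.1 ht
      obtain ⟨hlt, hth1, -, hXmem⟩ := rowA hL ha1 hne hA
      rw [herase_a] at hXmem
      exact ⟨hlt, hth1, hXmem⟩
    have hTcP : ∀ u ∈ Tc, u < c ∧ u ∉ C.h1 ∧
        insert u (insert a K) ∈ (C.O1 \ C.O2) \ C.D := by
      intro u hu
      obtain ⟨-, hne, hA⟩ := Finset.mem_filter.1 hu
      obtain ⟨hlt, hth1, -, hXmem⟩ := rowA hL hc1 hne hA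
      rw [herase_c] at hXmem
      exact ⟨hlt, hth1, hXmem⟩
    have hfun : L.act (evm C.h1) = fun x =>
        evm C.h1 x
        + (∑ u ∈ Tc, evm (insert u (insert a K)) x)
        + L.b c * evm (insert a K) x
        + (∑ t ∈ Ta, evm (insert t (insert c K)) x)
        + L.b a * evm (insert c K) x
        + (∑ t ∈ Ta, ∑ u ∈ Tc, evm (insert u (insert t K)) x)
        + L.b c * (∑ t ∈ Ta, evm (insert t K) x)
        + L.b a * (∑ u ∈ Tc, evm (insert u K) x)
        + L.b a * L.b c * evm K x := by
      funext x
      show evm C.h1 (L.actPt x) = _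
      have hlhs : evm C.h1 (L.actPt x) = ∏ i ∈ C.h1, L.actPt x i := rfl
      have hKprod : (∏ i ∈ K, L.actPt x i) = evm K x :=
        Finset.prod_congr rfl fun i hi => actPt_K hL (by rw [← hKdef]; exact hi) x
      rw [hlhs]
      conv_lhs => rw [hh1]
      rw [Finset.prod_insert hanotcK, Finset.prod_insert hcK, hKprod,
        actPt_apply L x a, actPt_apply L x c, ← hTa, ← hTc]
      conv_rhs => rw [hh1]
      simp only [← evm_mul_x, ← Finset.mul_sum, ← Finset.sum_mul]
      ring
    rw [hfun]
    simp only [mcoeff_add, mcoeff_finsum, mcoeff_const_mul, mcoeff_evm]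
    have k2 : (∑ u ∈ Tc, if S = insert u (insert a K) then (1:ZMod 2) else 0) = 0 :=
      Finset.sum_eq_zero fun u hu => if_neg (killX _ (hTcP u hu).2.2)
    have k3 : L.b c * (if S = insert a K then (1:ZMod 2) else 0) = 0 := by
      rcases eq_or_ne (L.b c) 0 with hb | hb
      · rw [hb, zero_mul]
      · obtain ⟨-, hXmem⟩ := rowb hL hc1 hb
        rw [herase_c] at hXmem
        rw [if_neg (killX _ hXmem), mul_zero]
    have k4 : (∑ t ∈ Ta, if S = insert t (insert c K) then (1:ZMod 2) else 0) = 0 :=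
      Finset.sum_eq_zero fun t ht => if_neg (killX _ (hTaP t ht).2.2)
    have k5 : L.b a * (if S = insert c K then (1:ZMod 2) else 0) = 0 := by
      rcases eq_or_ne (L.b a) 0 with hb | hb
      · rw [hb, zero_mul]
      · obtain ⟨-, hXmem⟩ := rowb hL ha1 hb
        rw [herase_a] at hXmem
        rw [if_neg (killX _ hXmem), mul_zero]
    -- row index helpers
    have rowsingle : ∀ t : Fin n, t ∉ C.h1 → t < a →
        rowIdx C.h2 < rowIdx (insert t K) → True := fun _ _ _ _ => trivial
    have k6 : (∑ t ∈ Ta, ∑ u ∈ Tc, if S = insert u (insert t K) then (1:ZMod 2) else 0)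
        = 0 := by
      refine Finset.sum_eq_zero fun t ht => Finset.sum_eq_zero fun u hu => ?_
      obtain ⟨hta, ht1, hXa⟩ := hTaP t ht
      obtain ⟨huc, hu1, hXc⟩ := hTcP u hu
      have htK : t ∉ K := fun h => ht1 (Finset.mem_inter.1 h).1
      have huK : u ∉ K := fun h => hu1 (Finset.mem_inter.1 h).1
      have hct : c ≠ t := fun h => ht1 (h ▸ hc1)
      have hau : a ≠ u := fun h => hu1 (h ▸ ha1)
      by_cases htu : t = u
      · subst htu
        rw [Finset.insert_idem]
        refine if_neg (kill _ (Finset.subset_insert _ _) ?_ ?_)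
        · have e1 : rowIdx (insert t K)
              = rowIdx (insert c (insert t K)) + 2 ^ (c:ℕ) :=
            rowIdx_insert (by simp [hct, hcK])
          have e2 : insert c (insert t K) = insert t (insert c K) := Finset.insert_comm _ _ _
          have := X_row hXa
          rw [← e2] at this
          have hpc : 0 < 2 ^ (c:ℕ) := Nat.pow_pos (by norm_num)
          omega
        · intro hO2
          obtain ⟨-, hovd, -⟩ := hO2
          exact noOvd_D2 hac ha1 ha2 hc1 hc2 hh1 ht1 hta
            (by rcases lt_or_ge t c with h | h
                · exact h
                · exfalso
                  -- t < c must hold since u = t ∈ Tc gives t < c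
                  exact absurd huc (not_lt.2 h)) hXa hXc hovd
      · refine if_neg (kill _ ((Finset.subset_insert _ _).trans (Finset.subset_insert _ _)) ?_ ?_)
        · have hunotatK : u ∉ insert t K := by simp [Ne.symm htu, huK]
          have hunotaK : u ∉ insert a K := by simp [Ne.symm hau, huK]
          have e1 : rowIdx (insert t K)
              = rowIdx (insert u (insert t K)) + 2 ^ (u:ℕ) := rowIdx_insert hunotatK
          have e2 : rowIdx (insert a K)
              = rowIdx (insert u (insert a K)) + 2 ^ (u:ℕ) := rowIdx_insert hunotaK
          have e3 : rowIdx K = rowIdx (insert t K) + 2 ^ (t:ℕ) := rowIdx_insert htK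
          have e4 : rowIdx K = rowIdx (insert a K) + 2 ^ (a:ℕ) := rowIdx_insert haK
          have hpow : 2 ^ (t:ℕ) < 2 ^ (a:ℕ) := pow_lt_pow_iff_fin.2 hta
          have := X_row hXc
          omega
        · intro hO2
          obtain ⟨-, hovd, -⟩ := hO2
          exact noOvd_D1 hac ha1 ha2 hc1 hc2 hh1 ht1 hu1 hta huc htu hXa hXc hovd
    have k7 : L.b c * (∑ t ∈ Ta, if S = insert t K then (1:ZMod 2) else 0) = 0 := by
      rcases eq_or_ne (L.b c) 0 with hb | hb
      · rw [hb, zero_mul]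
      · obtain ⟨-, hGc⟩ := rowb hL hc1 hb
        rw [herase_c] at hGc
        have hz : (∑ t ∈ Ta, if S = insert t K then (1:ZMod 2) else 0) = 0 := by
          refine Finset.sum_eq_zero fun t ht => ?_
          obtain ⟨hta, ht1, hXa⟩ := hTaP t ht
          refine if_neg (kill _ (Finset.subset_insert _ _) ?_ ?_)
          · have hct : c ≠ t := fun h => ht1 (h ▸ hc1)
            have e1 : rowIdx (insert t K)
                = rowIdx (insert c (insert t K)) + 2 ^ (c:ℕ) :=
              rowIdx_insert (by simp [hct, hcK])
            have e2 : insert c (insert t K) = insert t (insert c K) := Finset.insert_comm _ _ _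
            have := X_row hXa
            rw [← e2] at this
            have hpc : 0 < 2 ^ (c:ℕ) := Nat.pow_pos (by norm_num)
            omega
          · intro hO2
            obtain ⟨-, hovd, -⟩ := hO2
            exact noOvd_D3 hac ha1 ha2 hc1 hc2 hh1 ht1 hta hXa hGc hovd
        rw [hz, mul_zero]
    have k8 : L.b a * (∑ u ∈ Tc, if S = insert u K then (1:ZMod 2) else 0) = 0 := by
      rcases eq_or_ne (L.b a) 0 with hb | hb
      · rw [hb, zero_mul]
      · obtain ⟨-, hGa⟩ := rowb hL ha1 hb
        rw [herase_a] at hGa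
        have hz : (∑ u ∈ Tc, if S = insert u K then (1:ZMod 2) else 0) = 0 := by
          refine Finset.sum_eq_zero fun u hu => ?_
          obtain ⟨huc, hu1, hXc⟩ := hTcP u hu
          refine if_neg (kill _ (Finset.subset_insert _ _) ?_ ?_)
          · have hau : a ≠ u := fun h => hu1 (h ▸ ha1)
            have e1 : rowIdx (insert u K)
                = rowIdx (insert a (insert u K)) + 2 ^ (a:ℕ) :=
              rowIdx_insert (by simp [hau, haK])
            have e2 : insert a (insert u K) = insert u (insert a K) := Finset.insert_comm _ _ _
            have := X_row hXc
            rw [← e2] at this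
            have hpa : 0 < 2 ^ (a:ℕ) := Nat.pow_pos (by norm_num)
            omega
          · intro hO2
            obtain ⟨-, hovd, -⟩ := hO2
            exact noOvd_D3 hac.symm hc1 hc2 ha1 ha2 hh1' hu1 huc hXc hGa hovd
        rw [hz, mul_zero]
    have k9 : L.b a * L.b c * (if S = K then (1:ZMod 2) else 0) = 0 := by
      rcases eq_or_ne (L.b a) 0 with hb | hb
      · rw [hb, zero_mul, zero_mul]
      rcases eq_or_ne (L.b c) 0 with hb' | hb'
      · rw [hb', mul_zero, zero_mul]
      obtain ⟨-, hGa⟩ := rowb hL ha1 hb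
      rw [herase_a] at hGa
      obtain ⟨-, hGc⟩ := rowb hL hc1 hb'
      rw [herase_c] at hGc
      have : S ≠ K := by
        refine kill _ (le_refl _) ?_ ?_
        · have e1 : rowIdx K = rowIdx (insert a K) + 2 ^ (a:ℕ) := rowIdx_insert haK
          have := X_row hGc
          have hpa : 0 < 2 ^ (a:ℕ) := Nat.pow_pos (by norm_num)
          omega
        · intro hO2
          obtain ⟨-, hovd, -⟩ := hO2
          exact noOvd_D5 hac ha1 ha2 hc1 hc2 hh1 hGa hGc hovd
      rw [if_neg this, mul_zero]
    rw [if_neg killh1, k2, k3, k4, k5, k6, k7, k8, k9]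
    ring
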